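/- Let v(ζ) be a random vector in ℝ^d with E[v(ζ)] = v, and for τ > 0 define clip(z, τ) = z · min(1, τ/‖z‖). Then for any p > 1, the clipping bias satisfies ‖v − E[clip(v(ζ), τ)]‖ ≤ (E[‖v(ζ)‖^p])^{1/p} · (P(‖v(ζ)‖ ≥ τ))^{1 − 1/p} − τ · P(‖v(ζ)‖ ≥ τ). -/

import Mathlib

open MeasureTheory

noncomputable def clip {d : ℕ} (z : EuclideanSpace ℝ (Fin d)) (τ : ℝ) :
    EuclideanSpace ℝ (Fin d) := (min 1 (τ / ‖z‖)) • z

/-- Hölder-type clipping bias bound. -/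
theorem clipping_bias {d : ℕ} {Ω : Type*} [MeasurableSpace Ω] (P : MeasureTheory.Measure Ω)
    [MeasureTheory.IsProbabilityMeasure P]
    (V : Ω → EuclideanSpace ℝ (Fin d)) (v : EuclideanSpace ℝ (Fin d))
    (hmeas : Measurable V)
    (hint : MeasureTheory.Integrable V P) (hmean : (∫ ω, V ω ∂P) = v)
    (p τ : ℝ) (hp : 1 < p) (hτ : 0 < τ)
    (hmom : MeasureTheory.Integrable (fun ω => ‖V ω‖ ^ p) P) :
    ‖v - ∫ ω, clip (V ω) τ ∂P‖ ≤
      (∫ ω, ‖V ω‖ ^ p ∂P) ^ (1 / p) *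
        (P {ω | τ ≤ ‖V ω‖}).toReal ^ (1 - 1 / p) -
      τ * (P {ω | τ ≤ ‖V ω‖}).toReal := by
  have hp0 : (0:ℝ) < p := zero_lt_one.trans hp
  set q : ℝ := p / (p - 1) with hq_def
  have hpq : p.HolderConjugate q := Real.HolderConjugate.conjExponent hp
  set A : Set Ω := {ω | τ ≤ ‖V ω‖} with hA_def
  have hA : MeasurableSet A := measurableSet_le measurable_const hmeas.norm
  -- measurability and integrability of the clipped vector
  have hCmeas : Measurable fun ω => clip (V ω) τ := by
    unfold clip
    exact (measurable_const.min (measurable_const.div hmeas.norm)).smul hmeas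
  have hmin_nonneg : ∀ ω, 0 ≤ min 1 (τ / ‖V ω‖) := fun ω =>
    le_min zero_le_one (div_nonneg hτ.le (norm_nonneg _))
  have hCnorm : ∀ ω, ‖clip (V ω) τ‖ ≤ ‖V ω‖ := by
    intro ω
    unfold clip
    rw [norm_smul, Real.norm_of_nonneg (hmin_nonneg ω)]
    nlinarith [min_le_left 1 (τ / ‖V ω‖), norm_nonneg (V ω), hmin_nonneg ω]
  have hCint : Integrable (fun ω => clip (V ω) τ) P :=
    hint.norm.mono' hCmeas.aestronglyMeasurable (Filter.Eventually.of_forall hCnorm)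
  -- pointwise identity for the clipping error
  have hkey : ∀ ω, ‖V ω - clip (V ω) τ‖ = A.indicator (fun ω => ‖V ω‖ - τ) ω := by
    intro ω
    by_cases hω : ω ∈ A
    · have hτz : τ ≤ ‖V ω‖ := hω
      have hz : 0 < ‖V ω‖ := lt_of_lt_of_le hτ hτz
      have hdiv : τ / ‖V ω‖ ≤ 1 := (div_le_one hz).2 hτz
      rw [Set.indicator_of_mem hω]
      unfold clip
      rw [min_eq_right hdiv]
      have h1 : V ω - (τ / ‖V ω‖) • V ω = (1 - τ / ‖V ω‖) • V ω := by
        rw [sub_smul, one_smul]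
      rw [h1, norm_smul, Real.norm_of_nonneg (by linarith)]
      field_simp
    · rw [Set.indicator_of_notMem hω]
      have hz : ‖V ω‖ < τ := not_le.1 hω
      unfold clip
      rcases eq_or_ne (V ω) 0 with h0 | h0
      · simp [h0]
      · have hzpos : 0 < ‖V ω‖ := norm_pos_iff.2 h0
        rw [min_eq_left (le_of_lt ((one_lt_div hzpos).2 hz))]
        rw [one_smul, sub_self, norm_zero]
  -- rewrite the bias as an integral
  have step1 : v - ∫ ω, clip (V ω) τ ∂P = ∫ ω, (V ω - clip (V ω) τ) ∂P := by
    rw [integral_sub hint hCint, hmean]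
  have step2 : ‖∫ ω, (V ω - clip (V ω) τ) ∂P‖ ≤
      ∫ ω, A.indicator (fun ω => ‖V ω‖ - τ) ω ∂P := by
    refine (norm_integral_le_integral_norm _).trans_eq ?_
    exact integral_congr_ae (Filter.Eventually.of_forall hkey)
  have hVnormIntOn : IntegrableOn (fun ω => ‖V ω‖) A P := hint.norm.integrableOn
  have step3 : ∫ ω, A.indicator (fun ω => ‖V ω‖ - τ) ω ∂P
      = (∫ ω in A, ‖V ω‖ ∂P) - τ * (P A).toReal := by
    rw [integral_indicator hA,
      integral_sub hVnormIntOn (integrableOn_const (measure_lt_top P A).ne),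
      setIntegral_const, smul_eq_mul, mul_comm, measureReal_def]
  -- Hölder's inequality
  have hpne : ENNReal.ofReal p ≠ 0 := by
    simp [ENNReal.ofReal_eq_zero, not_le, hp0]
  have hptop : ENNReal.ofReal p ≠ ⊤ := ENNReal.ofReal_ne_top
  have hVmem : MemLp V (ENNReal.ofReal p) P := by
    rw [← memLp_norm_rpow_iff hmeas.aestronglyMeasurable hpne hptop,
      ENNReal.toReal_ofReal hp0.le, ENNReal.div_self hpne hptop]
    exact memLp_one_iff_integrable.2 hmom
  have hfmem : MemLp (fun ω => ‖V ω‖) (ENNReal.ofReal p) P := hVmem.norm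
  have hgmem : MemLp (A.indicator fun _ => (1:ℝ)) (ENNReal.ofReal q) P :=
    MemLp.of_bound (aestronglyMeasurable_const.indicator hA) 1
      (Filter.Eventually.of_forall fun ω => by
        by_cases h : ω ∈ A <;> simp [Set.indicator_of_mem, Set.indicator_of_notMem, h])
  have hHolder := integral_mul_le_Lp_mul_Lq_of_nonneg hpq
      (Filter.Eventually.of_forall fun ω => norm_nonneg (V ω))
      (Filter.Eventually.of_forall fun ω =>
        Set.indicator_nonneg (fun _ _ => zero_le_one) ω)
      hfmem hgmem
  have hprod : (fun a => ‖V a‖ * A.indicator (fun _ => (1:ℝ)) a)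
      = A.indicator fun a => ‖V a‖ := by
    funext a
    by_cases h : a ∈ A <;> simp [Set.indicator_of_mem, Set.indicator_of_notMem, h]
  have hpow : (fun a => A.indicator (fun _ => (1:ℝ)) a ^ q)
      = A.indicator fun _ => (1:ℝ) := by
    funext a
    by_cases h : a ∈ A <;>
      simp [Set.indicator_of_mem, Set.indicator_of_notMem, h,
        Real.zero_rpow hpq.symm.ne_zero]
  rw [hprod] at hHolder
  have hHolder2 : (∫ ω in A, ‖V ω‖ ∂P) ≤
      (∫ ω, ‖V ω‖ ^ p ∂P) ^ (1 / p) * (P A).toReal ^ (1 / q) := by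
    calc (∫ ω in A, ‖V ω‖ ∂P) = ∫ a, A.indicator (fun a => ‖V a‖) a ∂P := by
          rw [integral_indicator hA]
      _ ≤ (∫ a, ‖V a‖ ^ p ∂P) ^ (1 / p) *
          (∫ a, A.indicator (fun _ => (1:ℝ)) a ^ q ∂P) ^ (1 / q) := hHolder
      _ = (∫ ω, ‖V ω‖ ^ p ∂P) ^ (1 / p) * (P A).toReal ^ (1 / q) := by
          rw [hpow]
          have h1 : integral P (A.indicator fun _ => (1:ℝ)) = (P A).toReal :=
            (integral_indicator_one hA).trans (measureReal_def P A)
          rw [h1]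
  have hq_eq : 1 / q = 1 - 1 / p := by
    have := hpq.inv_add_inv_eq_one
    rw [one_div, one_div]
    linarith
  rw [step1]
  calc ‖∫ ω, (V ω - clip (V ω) τ) ∂P‖
      ≤ ∫ ω, A.indicator (fun ω => ‖V ω‖ - τ) ω ∂P := step2
    _ = (∫ ω in A, ‖V ω‖ ∂P) - τ * (P A).toReal := step3
    _ ≤ (∫ ω, ‖V ω‖ ^ p ∂P) ^ (1 / p) * (P A).toReal ^ (1 / q)
        - τ * (P A).toReal := by linarith
    _ = (∫ ω, ‖V ω‖ ^ p ∂P) ^ (1 / p) * (P A).toReal ^ (1 - 1 / p)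
        - τ * (P A).toReal := by rw [hq_eq]
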